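/- Let Λ be a ring, W a finitely generated minimal cogenerator left Λ-module over a left artinian ring Λ, and Δ = End_Λ(W). Then for every finitely generated left Λ-module X, soc(Hom_Λ(X, W)) ≅ Hom_Λ(top(X), W) as right Δ-modules. -/

import Mathlib

universe u v

/-- A submodule `N` of `M` is essential if it intersects every nonzero submodule
nontrivially. -/
def EssentialIn {R : Type u} [Ring R] {M : Type v} [AddCommGroup M] [Module R M]
    (N : Submodule R M) : Prop :=
  ∀ L : Submodule R M, L ≠ ⊥ → N ⊓ L ≠ ⊥

/-- `i : M →ₗ[R] E` exhibits `E` as an injective hull of `M`. -/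
def IsInjHull (R : Type u) [Ring R] {M : Type v} [AddCommGroup M] [Module R M]
    (E : Type v) [AddCommGroup E] [Module R E] (i : M →ₗ[R] E) : Prop :=
  Module.Injective R E ∧ Function.Injective i ∧ EssentialIn (LinearMap.range i)

/-- The socle of a module: the sum of all simple submodules. -/
def socle' (R : Type u) [Ring R] (M : Type v) [AddCommGroup M] [Module R M] :
    Submodule R M :=
  sSup {S : Submodule R M | IsSimpleModule R S}

/-- The (Jacobson) radical of a module: the intersection of all maximal submodules. -/
def radical' (R : Type u) [Ring R] (M : Type v) [AddCommGroup M] [Module R M] :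
    Submodule R M :=
  sInf {N : Submodule R M | IsCoatom N}

section Aux

variable {Λ : Type v} [Ring Λ] {W : Type v} [AddCommGroup W] [Module Λ W]

/-- Injectivity transfers along linear equivalences. -/
private lemma aux_injective_of_equiv {Q Q' : Type v} [AddCommGroup Q] [Module Λ Q]
    [AddCommGroup Q'] [Module Λ Q'] (e : Q ≃ₗ[Λ] Q') (h : Module.Injective Λ Q) :
    Module.Injective Λ Q' := by
  constructor
  intro A B _ _ _ _ f hf g
  obtain ⟨h', hh'⟩ := h.out f hf ((e.symm : Q' →ₗ[Λ] Q).comp g)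
  refine ⟨(e : Q →ₗ[Λ] Q').comp h', fun x => ?_⟩
  have := hh' x
  simp only [LinearMap.comp_apply, LinearEquiv.coe_coe] at this ⊢
  rw [this, LinearEquiv.apply_symm_apply]

/-- A product of injective modules is injective. -/
private lemma aux_injective_pi {η : Type v} (Q : η → Type v) [∀ i, AddCommGroup (Q i)]
    [∀ i, Module Λ (Q i)] (h : ∀ i, Module.Injective Λ (Q i)) :
    Module.Injective Λ (∀ i, Q i) := by
  constructor
  intro A B _ _ _ _ f hf g
  choose h' hh' using fun i => (h i).out f hf ((LinearMap.proj i).comp g)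
  refine ⟨LinearMap.pi h', fun x => ?_⟩
  ext i
  simpa using hh' i x

/-- `Fin n`-indexed products of an injective module are injective. -/
private lemma aux_injective_fin (winj : Module.Injective Λ W) (n : ℕ) :
    Module.Injective Λ (Fin n → W) := by
  have h := aux_injective_pi (fun _ : ULift.{v} (Fin n) => W) fun _ => winj
  exact aux_injective_of_equiv
    (LinearEquiv.funCongrLeft Λ W (Equiv.ulift.symm : Fin n ≃ ULift.{v} (Fin n))) h

/-- The annihilator of a submodule `Y ≤ X` inside `Hom_Λ(X, W)`, as a submodule over
`End_Λ(W)`. -/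
private def annSub (Λ : Type v) [Ring Λ] (W : Type v) [AddCommGroup W] [Module Λ W]
    {X : Type v} [AddCommGroup X] [Module Λ X] (Y : Submodule Λ X) :
    Submodule (Module.End Λ W) (X →ₗ[Λ] W) where
  carrier := {f | Y ≤ LinearMap.ker f}
  add_mem' := by
    intro f g hf hg x hx
    have h1 : f x = 0 := hf hx
    have h2 : g x = 0 := hg hx
    rw [LinearMap.mem_ker, LinearMap.add_apply, h1, h2, add_zero]
  zero_mem' := by intro x _; simp
  smul_mem' := by
    intro c f hf x hx
    have h1 : f x = 0 := hf hx
    rw [LinearMap.mem_ker, LinearMap.smul_apply, h1, smul_zero]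

private lemma mem_annSub {X : Type v} [AddCommGroup X] [Module Λ X] {Y : Submodule Λ X}
    {f : X →ₗ[Λ] W} : f ∈ annSub Λ W Y ↔ Y ≤ LinearMap.ker f := Iff.rfl

/-- Precomposition with the quotient map, as an `End_Λ(W)`-linear map. -/
private def precompQ (Λ : Type v) [Ring Λ] (W : Type v) [AddCommGroup W] [Module Λ W]
    {X : Type v} [AddCommGroup X] [Module Λ X] (Y : Submodule Λ X) :
    ((X ⧸ Y) →ₗ[Λ] W) →ₗ[Module.End Λ W] (X →ₗ[Λ] W) where
  toFun k := k.comp Y.mkQ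
  map_add' k l := by ext x; simp
  map_smul' c k := by ext x; simp

private lemma precompQ_injective {X : Type v} [AddCommGroup X] [Module Λ X]
    (Y : Submodule Λ X) : Function.Injective (precompQ Λ W Y) := by
  intro k l h
  refine LinearMap.ext fun q => ?_
  obtain ⟨x, rfl⟩ := Submodule.mkQ_surjective Y q
  exact LinearMap.congr_fun h x

private lemma range_precompQ {X : Type v} [AddCommGroup X] [Module Λ X]
    (Y : Submodule Λ X) : LinearMap.range (precompQ Λ W Y) = annSub Λ W Y := by
  ext f
  constructor
  · rintro ⟨k, rfl⟩
    intro x hx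
    have h0 : Y.mkQ x = 0 := by
      rw [Submodule.mkQ_apply, Submodule.Quotient.mk_eq_zero]; exact hx
    rw [LinearMap.mem_ker]
    show k (Y.mkQ x) = 0
    rw [h0, map_zero]
  · intro hf
    refine ⟨Y.liftQ f hf, ?_⟩
    show (Y.liftQ f hf).comp Y.mkQ = f
    exact Submodule.liftQ_mkQ (p := Y) f hf

/-- In an Artinian module, any `iInf` of submodules is a finite `iInf`. -/
private lemma aux_finite_iInf {M : Type v} [AddCommGroup M] [Module Λ M] [IsArtinian Λ M]
    {η : Type v} (c : η → Submodule Λ M) :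
    ∃ (n : ℕ) (f : Fin n → η), (⨅ i, c (f i)) = ⨅ j, c j := by
  obtain ⟨m0, hm0, hmin⟩ := IsArtinian.set_has_minimal
    {m : Submodule Λ M | ∃ (n : ℕ) (f : Fin n → η), m = ⨅ i, c (f i)}
    ⟨⊤, 0, Fin.elim0, (iInf_of_empty _).symm⟩
  obtain ⟨n, f, rfl⟩ := hm0
  refine ⟨n, f, le_antisymm (le_iInf fun j => ?_) (le_iInf fun i => iInf_le _ _)⟩
  have heq : (⨅ i, c (f i)) ⊓ c j = ⨅ i, c (Fin.cons (α := fun _ => η) j f i) := by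
    apply le_antisymm
    · refine le_iInf fun i => ?_
      refine Fin.cases (motive := fun i : Fin (n + 1) =>
        (⨅ i, c (f i)) ⊓ c j ≤ c (Fin.cons (α := fun _ => η) j f i)) ?_ ?_ i
      · simpa using inf_le_right
      · intro k
        simpa using inf_le_left.trans (iInf_le _ k)
    · exact le_inf
        (le_iInf fun k => by simpa using iInf_le (fun i => c (Fin.cons (α := fun _ => η) j f i)) k.succ)
        (by simpa using iInf_le (fun i => c (Fin.cons (α := fun _ => η) j f i)) (0 : Fin (n + 1)))
  have hmem : (⨅ i, c (f i)) ⊓ c j ∈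
      {m : Submodule Λ M | ∃ (n : ℕ) (f : Fin n → η), m = ⨅ i, c (f i)} :=
    ⟨n + 1, Fin.cons (α := fun _ => η) j f, heq⟩
  have hnotlt := hmin _ hmem
  have hle : (⨅ i, c (f i)) ⊓ c j ≤ ⨅ i, c (f i) := inf_le_left
  have heq2 : (⨅ i, c (f i)) ⊓ c j = ⨅ i, c (f i) :=
    eq_of_le_of_not_lt hle hnotlt
  exact inf_eq_left.mp heq2

/-- Double annihilator property: if `g` vanishes on the common kernel of an
`End_Λ(W)`-submodule `T` of `Hom_Λ(X, W)`, then `g ∈ T`. -/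
private lemma aux_mem_of_iInf_ker_le (winj : Module.Injective Λ W)
    {X : Type v} [AddCommGroup X] [Module Λ X] [IsArtinian Λ X]
    (T : Submodule (Module.End Λ W) (X →ₗ[Λ] W)) (g : X →ₗ[Λ] W)
    (hg : (⨅ f : T, LinearMap.ker (f : X →ₗ[Λ] W)) ≤ LinearMap.ker g) : g ∈ T := by
  classical
  obtain ⟨n, fs, hfs⟩ := aux_finite_iInf (fun f : T => LinearMap.ker (f : X →ₗ[Λ] W))
  set φ : X →ₗ[Λ] (Fin n → W) := LinearMap.pi fun i => (fs i : X →ₗ[Λ] W) with hφ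
  have hkerφ : LinearMap.ker φ = ⨅ i, LinearMap.ker ((fs i : X →ₗ[Λ] W)) :=
    LinearMap.ker_pi _
  have hker_le : LinearMap.ker φ ≤ LinearMap.ker g := by
    rw [hkerφ, hfs]; exact hg
  set ψ := (LinearMap.ker φ).liftQ φ le_rfl with hψdef
  have hψ : Function.Injective ψ :=
    LinearMap.ker_eq_bot.mp (Submodule.ker_liftQ_eq_bot _ _ _ le_rfl)
  obtain ⟨h, hh⟩ := winj.out ψ hψ ((LinearMap.ker φ).liftQ g hker_le)
  have hgsum : g = ∑ i : Fin n,
      (h.comp (LinearMap.single Λ (fun _ : Fin n => W) i)) • (fs i : X →ₗ[Λ] W) := by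
    ext x
    have h1 : g x = h (φ x) := by
      have := hh (Submodule.Quotient.mk x)
      rw [hψdef, Submodule.liftQ_apply, Submodule.liftQ_apply] at this
      exact this.symm
    rw [h1, show φ x = ∑ i, Pi.single i (φ x i) from (Finset.univ_sum_single (φ x)).symm,
      map_sum]
    simp [hφ, LinearMap.pi_apply]
  rw [hgsum]
  exact Submodule.sum_mem _ fun i _ => T.smul_mem _ (fs i).2

/-- If `M` is a simple module that embeds into the injective module `W`, then
`Hom_Λ(M, W)` is a simple `End_Λ(W)`-module. -/
private lemma aux_hom_simple (winj : Module.Injective Λ W) {M : Type v} [AddCommGroup M]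
    [Module Λ M] (hM : IsSimpleModule Λ M) (j : M →ₗ[Λ] W) (hj : Function.Injective j) :
    IsSimpleModule (Module.End Λ W) (M →ₗ[Λ] W) := by
  haveI := hM
  haveI : Nontrivial M := IsSimpleModule.nontrivial Λ M
  obtain ⟨m, hm⟩ := exists_ne (0 : M)
  have hj0 : j ≠ 0 := by
    intro h
    exact hm (hj (by rw [h, map_zero]; rfl))
  have hinj : ∀ f : M →ₗ[Λ] W, f ≠ 0 → Function.Injective f := by
    intro f hf
    rcases eq_bot_or_eq_top (LinearMap.ker f) with h | h
    · exact LinearMap.ker_eq_bot.mp h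
    · exact absurd (LinearMap.ker_eq_top.mp h) hf
  haveI : Nontrivial (M →ₗ[Λ] W) := ⟨⟨j, 0, hj0⟩⟩
  refine { toIsSimpleOrder := { eq_bot_or_eq_top := ?_ } }
  intro B
  rcases eq_or_ne B ⊥ with hB | hB
  · exact Or.inl hB
  · refine Or.inr (eq_top_iff.mpr fun g _ => ?_)
    obtain ⟨f, hfB, hf0⟩ := (Submodule.ne_bot_iff B).mp hB
    rcases eq_or_ne g 0 with rfl | hg0
    · exact B.zero_mem
    · obtain ⟨h, hh⟩ := winj.out f (hinj f hf0) g
      have : g = h • f := by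
        ext x
        rw [LinearMap.smul_apply, Module.End.smul_def]
        exact (hh x).symm
      rw [this]
      exact B.smul_mem h hfB

/-- `W` is a cogenerator: every nonzero element of any module is detected by a map to
`W`. -/
private lemma aux_cog (winj : Module.Injective Λ W)
    (hembed : ∀ (M : Type v) [AddCommGroup M] [Module Λ M], IsSimpleModule Λ M →
      ∃ j : M →ₗ[Λ] W, Function.Injective j)
    (M : Type v) [AddCommGroup M] [Module Λ M] (m : M) (hm : m ≠ 0) :
    ∃ f : M →ₗ[Λ] W, f m ≠ 0 := by
  have hchainub : ∀ c ⊆ {N : Submodule Λ M | m ∉ N}, IsChain (· ≤ ·) c → ∀ y ∈ c,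
      ∃ ub ∈ {N : Submodule Λ M | m ∉ N}, ∀ z ∈ c, z ≤ ub := by
    intro c hcs hchain y hy
    refine ⟨sSup c, ?_, fun z hz => le_sSup hz⟩
    intro hmem
    obtain ⟨P, hPc, hmP⟩ :=
      (Submodule.mem_sSup_of_directed ⟨y, hy⟩ hchain.directedOn).mp hmem
    exact hcs hPc hmP
  obtain ⟨N, -, hN⟩ := zorn_le_nonempty₀ _ hchainub ⊥ (by simpa)
  have hmN : m ∉ N := hN.prop
  set mq : M ⧸ N := N.mkQ m with hmqdef
  have hmq : mq ≠ 0 := by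
    rw [hmqdef, Submodule.mkQ_apply, Ne, Submodule.Quotient.mk_eq_zero]
    exact hmN
  have hess : ∀ L : Submodule Λ (M ⧸ N), L ≠ ⊥ → mq ∈ L := by
    intro L hL
    by_contra hm'
    have hm'' : m ∉ L.comap N.mkQ := fun h => hm' h
    have hcm : N ≤ L.comap N.mkQ := by
      intro x hx
      have : N.mkQ x = 0 := by
        rw [Submodule.mkQ_apply, Submodule.Quotient.mk_eq_zero]; exact hx
      exact Submodule.mem_comap.mpr (by rw [this]; exact L.zero_mem)
    have heq : L.comap N.mkQ = N := le_antisymm (hN.2 hm'' hcm) hcm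
    apply hL
    have := Submodule.map_comap_eq_of_surjective (Submodule.mkQ_surjective N) L
    rw [← this, heq]
    exact le_bot_iff.mp (Submodule.map_le_iff_le_comap.mpr
      (by rw [Submodule.comap_bot, Submodule.ker_mkQ]))
  have hC : IsSimpleModule Λ (Submodule.span Λ {mq}) := by
    rw [isSimpleModule_iff_isAtom]
    constructor
    · rw [Ne, Submodule.span_singleton_eq_bot]; exact hmq
    · intro b hb
      by_contra hb0
      exact hb.ne (le_antisymm hb.le
        (Submodule.span_le.mpr (Set.singleton_subset_iff.mpr (hess b hb0))))
  obtain ⟨j, hj⟩ := hembed (Submodule.span Λ {mq}) hC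
  obtain ⟨h, hh⟩ := winj.out (Submodule.span Λ {mq}).subtype (Submodule.injective_subtype _) j
  refine ⟨h.comp N.mkQ, ?_⟩
  have hmem : mq ∈ Submodule.span Λ {mq} := Submodule.mem_span_singleton_self mq
  have h2 : h mq = j ⟨mq, hmem⟩ := hh ⟨mq, hmem⟩
  intro h0
  apply hmq
  have h3 : j ⟨mq, hmem⟩ = 0 := by
    rw [← h2, hmqdef]
    simpa using h0
  have h4 : (⟨mq, hmem⟩ : Submodule.span Λ {mq}) = 0 := hj (by rw [h3, map_zero])
  simpa using congrArg Subtype.val h4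

end Aux

/-- Let `Λ` be left artinian, `W` a finitely generated minimal
cogenerator (`W ≅ ⊕ᵢ E(Sᵢ)` over a complete set of representatives `Sᵢ` of the simple
left `Λ`-modules) and `Δ = End_Λ(W)`, acting on `Hom_Λ(X, W)` by composition (the
paper's right `Δ`-modules are exactly modules over Mathlib's `Module.End Λ W`, which
acts by postcomposition, since the paper writes homomorphisms on the right).  Then for
every finitely generated `Λ`-module `X`,
`soc(Hom_Λ(X, W)) ≅ Hom_Λ(top(X), W)` as (right) `Δ`-modules, where
`top(X) = X / rad(X)`. -/
theorem socle_hom_iso_hom_top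
    (Λ : Type v) [Ring Λ] [IsArtinian Λ Λ]
    (W : Type v) [AddCommGroup W] [Module Λ W] [Module.Finite Λ W]
    -- `W` is a minimal cogenerator: `W ≅ ⊕ᵢ E(Sᵢ)` where `{Sᵢ}` is a complete set of
    -- representatives of the isomorphism classes of simple left `Λ`-modules
    (ι : Type v) [DecidableEq ι]
    (S : ι → Type v) [∀ i, AddCommGroup (S i)] [∀ i, Module Λ (S i)]
    (hS : ∀ i, IsSimpleModule Λ (S i))
    (hSpair : ∀ i j, i ≠ j → IsEmpty (S i ≃ₗ[Λ] S j))
    (hScomplete : ∀ (S' : Type v) [AddCommGroup S'] [Module Λ S'],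
      IsSimpleModule Λ S' → ∃ i, Nonempty (S' ≃ₗ[Λ] S i))
    (ES : ι → Type v) [∀ i, AddCommGroup (ES i)] [∀ i, Module Λ (ES i)]
    (iS : ∀ i, S i →ₗ[Λ] ES i) (hES : ∀ i, IsInjHull Λ (ES i) (iS i))
    (hW : Nonempty (W ≃ₗ[Λ] DirectSum ι ES))
    -- the finitely generated module `X`
    (X : Type v) [AddCommGroup X] [Module Λ X] [Module.Finite Λ X] :
    Nonempty ((socle' (Module.End Λ W) (X →ₗ[Λ] W)) ≃ₗ[Module.End Λ W]
      ((X ⧸ radical' Λ X) →ₗ[Λ] W)) := by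
  classical
  obtain ⟨eW⟩ := hW
  -- each `ES i` is nontrivial
  have hESnt : ∀ i, Nontrivial (ES i) := by
    intro i
    haveI := hS i
    haveI : Nontrivial (S i) := IsSimpleModule.nontrivial Λ (S i)
    obtain ⟨s0, hs0⟩ := exists_ne (0 : S i)
    exact ⟨iS i s0, 0, fun h => hs0 ((hES i).2.1 (by rw [h, map_zero]))⟩
  -- `ι` is finite since `W` is finitely generated
  have hfin : Finite ι := by
    have hDS : Module.Finite Λ (DirectSum ι ES) := Module.Finite.equiv eW
    obtain ⟨s, hs⟩ := hDS.fg_top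
    set F : Finset ι := s.sup fun x => DFinsupp.support x with hF
    have hsub : ∀ x ∈ s, ∀ i, i ∉ F → x i = 0 := by
      intro x hx i hi
      by_contra hxi
      exact hi (Finset.mem_of_subset (Finset.le_sup (f := fun x : DirectSum ι ES =>
        DFinsupp.support x) hx) (DFinsupp.mem_support_iff.mpr hxi))
    have hZ : ∀ (x : DirectSum ι ES) (i : ι), i ∉ F → x i = 0 := by
      intro x i hi
      have hx : x ∈ Submodule.span Λ (s : Set (DirectSum ι ES)) := by
        rw [hs]; exact Submodule.mem_top
      induction hx using Submodule.span_induction with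
      | mem x hxs => exact hsub x hxs i hi
      | zero => simp
      | add x y _ _ hx hy => rw [DirectSum.add_apply, hx, hy, add_zero]
      | smul a x _ hx => rw [DirectSum.smul_apply, hx, smul_zero]
    have hmem : ∀ i : ι, i ∈ F := by
      intro i
      by_contra hi
      haveI := hESnt i
      obtain ⟨e0, he0⟩ := exists_ne (0 : ES i)
      apply he0
      have := hZ (DirectSum.lof Λ ι ES i e0) i hi
      rwa [DirectSum.lof_apply] at this
    exact Finite.of_injective (fun i : ι => (⟨i, hmem i⟩ : {j // j ∈ F}))
      fun a b h => by simpa using congrArg Subtype.val h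
  haveI := Fintype.ofFinite ι
  -- `W` is injective
  have winj : Module.Injective Λ W := by
    have hpi : Module.Injective Λ (∀ i, ES i) := aux_injective_pi _ fun i => (hES i).1
    exact aux_injective_of_equiv (eW.trans (DirectSum.linearEquivFunOnFintype Λ ι ES)).symm hpi
  -- every simple module embeds into `W`
  have hembed : ∀ (M : Type v) [AddCommGroup M] [Module Λ M], IsSimpleModule Λ M →
      ∃ j : M →ₗ[Λ] W, Function.Injective j := by
    intro M _ _ hM
    obtain ⟨i, ⟨e⟩⟩ := hScomplete M hM
    have hlof : Function.Injective (DirectSum.lof Λ ι ES i) := by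
      intro a b h
      have := congrArg (fun z : DirectSum ι ES => z i) h
      simpa [DirectSum.lof_apply] using this
    refine ⟨(eW.symm : DirectSum ι ES →ₗ[Λ] W).comp
      ((DirectSum.lof Λ ι ES i).comp ((iS i).comp (e : M →ₗ[Λ] S i))), ?_⟩
    simp only [LinearMap.coe_comp, LinearEquiv.coe_coe]
    exact eW.symm.injective.comp (hlof.comp (((hES i).2.1).comp e.injective))
  have cog := aux_cog winj hembed
  -- Step A : socle ≤ annihilator of radical
  have hsocK : socle' (Module.End Λ W) (X →ₗ[Λ] W) ≤ annSub Λ W (radical' Λ X) := by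
    refine sSup_le fun T hT => ?_
    haveI : IsSimpleModule (Module.End Λ W) T := hT
    set Y := ⨅ f : T, LinearMap.ker (f : X →ₗ[Λ] W) with hY
    have hTY : ∀ f : X →ₗ[Λ] W, Y ≤ LinearMap.ker f → f ∈ T :=
      fun f hf => aux_mem_of_iInf_ker_le winj T f hf
    have hcoatom : IsCoatom Y := by
      constructor
      · intro hYtop
        haveI : Nontrivial T := IsSimpleModule.nontrivial (Module.End Λ W) T
        obtain ⟨f, hf⟩ := exists_ne (0 : T)
        apply hf
        have h1 : Y ≤ LinearMap.ker (f : X →ₗ[Λ] W) := iInf_le _ f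
        rw [hYtop] at h1
        have h2 : (f : X →ₗ[Λ] W) = 0 := LinearMap.ker_eq_top.mp (top_le_iff.mp h1)
        exact Subtype.ext h2
      · intro Z hZ
        by_contra hZtop
        obtain ⟨x, -, hx⟩ := SetLike.exists_of_lt (lt_top_iff_ne_top.mpr hZtop : Z < ⊤)
        have hxq : (Z.mkQ x : X ⧸ Z) ≠ 0 := by
          rw [Submodule.mkQ_apply, Ne, Submodule.Quotient.mk_eq_zero]
          exact hx
        obtain ⟨k, hk⟩ := cog (X ⧸ Z) (Z.mkQ x) hxq
        set g := k.comp Z.mkQ with hgdef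
        have hgZ : Z ≤ LinearMap.ker g := by
          intro z hz
          have : Z.mkQ z = 0 := by
            rw [Submodule.mkQ_apply, Submodule.Quotient.mk_eq_zero]; exact hz
          rw [LinearMap.mem_ker, hgdef, LinearMap.comp_apply, this, map_zero]
        have hatom : IsAtom T := isSimpleModule_iff_isAtom.mp hT
        have hann_le : annSub Λ W Z ≤ T := fun f hf => hTY f (hZ.le.trans hf)
        have hg0 : g ≠ 0 := by
          intro h0
          exact hk (by simpa [hgdef] using LinearMap.congr_fun h0 x)
        have hann_ne : annSub Λ W Z ≠ ⊥ := by
          intro hb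
          apply hg0
          have : g ∈ annSub Λ W Z := hgZ
          rwa [hb, Submodule.mem_bot] at this
        have hann_eq : annSub Λ W Z = T := by
          rcases lt_or_eq_of_le hann_le with h | h
          · exact absurd (hatom.2 _ h) hann_ne
          · exact h
        have hZY : Z ≤ Y := le_iInf fun f => by
          have : (f : X →ₗ[Λ] W) ∈ annSub Λ W Z := by rw [hann_eq]; exact f.2
          exact this
        exact absurd hZY (not_le_of_gt hZ)
    intro f hf
    show radical' Λ X ≤ LinearMap.ker f
    exact le_trans (sInf_le (show Y ∈ {N : Submodule Λ X | IsCoatom N} from hcoatom))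
      (iInf_le (fun f : T => LinearMap.ker (f : X →ₗ[Λ] W)) ⟨f, hf⟩)
  -- Step B : annihilator of radical ≤ socle
  have hKsoc : annSub Λ W (radical' Λ X) ≤ socle' (Module.End Λ W) (X →ₗ[Λ] W) := by
    intro g hg
    obtain ⟨n, cs, hcs⟩ := aux_finite_iInf (fun c : {c : Submodule Λ X // IsCoatom c} => c.1)
    have hradinf : radical' Λ X = ⨅ i, (cs i).1 := by
      rw [radical', sInf_eq_iInf']
      exact hcs.symm
    set φ : X →ₗ[Λ] (∀ i : Fin n, X ⧸ (cs i).1) := LinearMap.pi fun i => (cs i).1.mkQ with hφ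
    have hkerφ : LinearMap.ker φ = radical' Λ X := by
      rw [hφ, LinearMap.ker_pi, hradinf]
      simp [Submodule.ker_mkQ]
    have hker_le : LinearMap.ker φ ≤ LinearMap.ker g := by
      rw [hkerφ]; exact hg
    set ψ := (LinearMap.ker φ).liftQ φ le_rfl with hψdef
    have hψ : Function.Injective ψ :=
      LinearMap.ker_eq_bot.mp (Submodule.ker_liftQ_eq_bot _ _ _ le_rfl)
    obtain ⟨h, hh⟩ := winj.out ψ hψ ((LinearMap.ker φ).liftQ g hker_le)
    have hgsum : g = ∑ i : Fin n,
        (precompQ Λ W (cs i).1) (h.comp (LinearMap.single Λ (fun i : Fin n => X ⧸ (cs i).1) i)) := by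
      ext x
      have h1 : g x = h (φ x) := by
        have := hh (Submodule.Quotient.mk x)
        rw [hψdef, Submodule.liftQ_apply, Submodule.liftQ_apply] at this
        exact this.symm
      rw [h1, show φ x = ∑ i, Pi.single i (φ x i) from (Finset.univ_sum_single (φ x)).symm,
        map_sum]
      simp [precompQ, hφ, LinearMap.pi_apply]
    rw [hgsum]
    refine Submodule.sum_mem _ fun i _ => ?_
    have hVsimple : IsSimpleModule (Module.End Λ W)
        (LinearMap.range (precompQ Λ W (cs i).1)) := by
      have hsimpleQ : IsSimpleModule Λ (X ⧸ (cs i).1) := isSimpleModule_iff_isCoatom.mpr (cs i).2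
      obtain ⟨j, hj⟩ := hembed _ hsimpleQ
      haveI := aux_hom_simple winj hsimpleQ j hj
      exact IsSimpleModule.congr
        (LinearEquiv.ofInjective (precompQ Λ W (cs i).1) (precompQ_injective _)).symm
    exact le_sSup (show LinearMap.range (precompQ Λ W (cs i).1) ∈
        {S : Submodule (Module.End Λ W) (X →ₗ[Λ] W) | IsSimpleModule (Module.End Λ W) S}
        from hVsimple)
      ⟨h.comp (LinearMap.single Λ (fun i : Fin n => X ⧸ (cs i).1) i), rfl⟩
  -- conclusion
  have heq : socle' (Module.End Λ W) (X →ₗ[Λ] W) =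
      LinearMap.range (precompQ Λ W (radical' Λ X)) := by
    rw [range_precompQ]
    exact le_antisymm hsocK hKsoc
  exact ⟨(LinearEquiv.ofEq _ _ heq).trans
    (LinearEquiv.ofInjective (precompQ Λ W (radical' Λ X)) (precompQ_injective _)).symm⟩
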